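/- Let K1 and K2 be closed convex cones in R^n with cos∠(−K1, K2) ≤ 1 − β for some β ∈ (0,1], where cos∠ denotes the maximal inner product between unit vectors of the respective cones. Then the statistical dimension satisfies √(δ(K1 + K2)) ≤ (√(δ(K1)) + √(δ(K2)))/√β. -/

import Mathlib

open scoped Pointwise

open MeasureTheory ProbabilityTheory Set
open scoped RealInnerProductSpace

noncomputable def stdGaussian (n : ℕ) : Measure (EuclideanSpace ℝ (Fin n)) :=
  Measure.map (EuclideanSpace.equiv (Fin n) ℝ).symm
    (Measure.pi fun _ : Fin n => gaussianReal 0 1)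

/-- Statistical dimension via the sup formulation
`δ(K) = E[(sup{⟪g,y⟫ : y ∈ K ∩ Bⁿ})²]`. -/
noncomputable def statDim {n : ℕ} (K : Set (EuclideanSpace ℝ (Fin n))) : ℝ :=
  ∫ g, (sSup {r : ℝ | ∃ y, y ∈ K ∧ ‖y‖ ≤ 1 ∧ r = ⟪g, y⟫}) ^ 2 ∂(stdGaussian n)

/-- Gauge of an atomic set: `γ_A(x) = inf{λ ≥ 0 : x ∈ λ·conv(A ∪ {0})}`. -/
noncomputable def agauge {n : ℕ} (A : Set (EuclideanSpace ℝ (Fin n)))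
    (x : EuclideanSpace ℝ (Fin n)) : ℝ :=
  gauge (convexHull ℝ (insert 0 A)) x

/-- Descent cone `D(A,x) = cone{d : γ_A(x+d) ≤ γ_A(x)}`. -/
def descCone {n : ℕ} (A : Set (EuclideanSpace ℝ (Fin n))) (x : EuclideanSpace ℝ (Fin n)) :
    Set (EuclideanSpace ℝ (Fin n)) :=
  {d | ∃ c : ℝ, ∃ s, 0 ≤ c ∧ agauge A (x + s) ≤ agauge A x ∧ d = c • s}

/-! ### Auxiliary lemmas -/

lemma gaussian_sq_integrable : Integrable (fun x : ℝ => x ^ 2) (gaussianReal 0 1) := by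
  rw [gaussianReal_of_var_ne_zero _ one_ne_zero,
    integrable_withDensity_iff (measurable_gaussianPDF 0 1)
      (ae_of_all _ fun x => ENNReal.ofReal_lt_top)]
  have h : (fun x : ℝ => x ^ 2 * (gaussianPDF 0 1 x).toReal)
      = fun x => (Real.sqrt (2 * Real.pi))⁻¹ * (x ^ (2:ℝ) * Real.exp (-(1/2) * x ^ 2)) := by
    ext x
    rw [gaussianPDF, ENNReal.toReal_ofReal (gaussianPDFReal_nonneg _ _ _), gaussianPDFReal]
    rw [show (2:ℝ) = ((2:ℕ):ℝ) by norm_num, Real.rpow_natCast]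
    push_cast
    ring_nf
  rw [h]
  exact (integrable_rpow_mul_exp_neg_mul_sq (by norm_num) (by norm_num : (-1:ℝ) < 2)).const_mul _

lemma map_eval_gauss {n : ℕ} (i : Fin n) :
    Measure.map (fun x : Fin n → ℝ => x i) (Measure.pi fun _ => gaussianReal 0 1)
      = gaussianReal 0 1 := by
  ext s hs
  rw [Measure.map_apply (measurable_pi_apply i) hs]
  have hpre : (fun x : Fin n → ℝ => x i) ⁻¹' s
      = Set.pi Set.univ (Function.update (fun _ : Fin n => (Set.univ : Set ℝ)) i s) := by
    ext x
    simp only [Set.mem_preimage, Set.mem_pi, Set.mem_univ, true_implies, Function.update_apply]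
    constructor
    · intro hx j
      by_cases hj : j = i
      · subst hj; simp [hx]
      · simp [hj]
    · intro hx
      have := hx i
      simpa using this
  rw [hpre, Measure.pi_pi]
  rw [Fintype.prod_eq_single i (fun j hj => by simp [Function.update_apply, hj])]
  simp

lemma integrable_norm_sq (n : ℕ) :
    Integrable (fun g : EuclideanSpace ℝ (Fin n) => ‖g‖ ^ 2) (stdGaussian n) := by
  rw [_root_.stdGaussian]
  have hmeas : Measurable ⇑(EuclideanSpace.equiv (Fin n) ℝ).symm :=
    (EuclideanSpace.equiv (Fin n) ℝ).symm.continuous.measurable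
  rw [integrable_map_measure (show Continuous (fun g : EuclideanSpace ℝ (Fin n) => ‖g‖ ^ 2) from
    continuous_norm.pow 2).aestronglyMeasurable hmeas.aemeasurable]
  have h : ((fun g : EuclideanSpace ℝ (Fin n) => ‖g‖ ^ 2) ∘ ⇑(EuclideanSpace.equiv (Fin n) ℝ).symm)
      = fun x : Fin n → ℝ => ∑ i, (x i) ^ 2 := by
    ext x
    simp only [Function.comp_apply]
    rw [EuclideanSpace.norm_eq, Real.sq_sqrt (by positivity)]
    congr 1
    ext i
    simp [Real.norm_eq_abs, sq_abs]
  rw [h]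
  apply integrable_finset_sum
  intro i _
  have h2 : Integrable (fun x : ℝ => x ^ 2) (gaussianReal 0 1) := gaussian_sq_integrable
  rw [← map_eval_gauss i] at h2
  exact (integrable_map_measure (continuous_pow 2).aestronglyMeasurable
    (measurable_pi_apply i).aemeasurable).1 h2

noncomputable def sfun {n : ℕ} (K : Set (EuclideanSpace ℝ (Fin n)))
    (g : EuclideanSpace ℝ (Fin n)) : ℝ :=
  sSup {r : ℝ | ∃ y, y ∈ K ∧ ‖y‖ ≤ 1 ∧ r = ⟪g, y⟫}

section sfun

variable {n : ℕ} {K : Set (EuclideanSpace ℝ (Fin n))}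

lemma sfun_bdd (K : Set (EuclideanSpace ℝ (Fin n))) (g : EuclideanSpace ℝ (Fin n)) :
    BddAbove {r : ℝ | ∃ y, y ∈ K ∧ ‖y‖ ≤ 1 ∧ r = ⟪g, y⟫} := by
  refine ⟨‖g‖, ?_⟩
  rintro r ⟨y, hy, hny, rfl⟩
  exact (real_inner_le_norm g y).trans (by nlinarith [norm_nonneg g])

lemma sfun_le_norm (K : Set (EuclideanSpace ℝ (Fin n))) (g : EuclideanSpace ℝ (Fin n)) :
    sfun K g ≤ ‖g‖ := by
  apply Real.sSup_le _ (norm_nonneg g)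
  rintro r ⟨y, hy, hny, rfl⟩
  exact (real_inner_le_norm g y).trans (by nlinarith [norm_nonneg g])

lemma sfun_nonneg (h0 : (0 : EuclideanSpace ℝ (Fin n)) ∈ K) (g : EuclideanSpace ℝ (Fin n)) :
    0 ≤ sfun K g :=
  le_csSup (sfun_bdd K g) ⟨0, h0, by simp, by simp⟩

lemma sfun_lipschitz (h0 : (0 : EuclideanSpace ℝ (Fin n)) ∈ K) :
    LipschitzWith 1 (sfun K) := by
  apply LipschitzWith.of_dist_le_mul
  intro g g'
  rw [NNReal.coe_one, one_mul, Real.dist_eq, dist_eq_norm]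
  have key : ∀ a b : EuclideanSpace ℝ (Fin n), sfun K a ≤ sfun K b + ‖a - b‖ := by
    intro a b
    apply Real.sSup_le
    · rintro r ⟨y, hy, hny, rfl⟩
      have h2 : ⟪b, y⟫ ≤ sfun K b := le_csSup (sfun_bdd K b) ⟨y, hy, hny, rfl⟩
      have h3 : ⟪a - b, y⟫ ≤ ‖a - b‖ :=
        (real_inner_le_norm _ _).trans (by nlinarith [norm_nonneg (a - b)])
      have h4 : ⟪a, y⟫ = ⟪b, y⟫ + ⟪a - b, y⟫ := by
        rw [inner_sub_left]; ring
      linarith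
    · have := sfun_nonneg h0 b
      positivity
  rw [abs_sub_le_iff]
  constructor
  · linarith [key g g']
  · rw [← norm_sub_rev]
    linarith [key g' g]

lemma inner_lower_bound {K₁ K₂ : Set (EuclideanSpace ℝ (Fin n))}
    (hK₁cone : ∀ c : ℝ, 0 ≤ c → ∀ x ∈ K₁, c • x ∈ K₁)
    (hK₂cone : ∀ c : ℝ, 0 ≤ c → ∀ x ∈ K₂, c • x ∈ K₂)
    {β : ℝ}
    (hangle : ∀ u v, u ∈ -K₁ → v ∈ K₂ → ‖u‖ = 1 → ‖v‖ = 1 → ⟪u, v⟫ ≤ 1 - β)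
    {u v : EuclideanSpace ℝ (Fin n)} (hu : u ∈ K₁) (hv : v ∈ K₂) :
    -((1 - β) * (‖u‖ * ‖v‖)) ≤ ⟪u, v⟫ := by
  rcases eq_or_ne u 0 with rfl | hu0
  · simp [inner_zero_left]
  rcases eq_or_ne v 0 with rfl | hv0
  · simp [inner_zero_right]
  have ha : (0:ℝ) < ‖u‖ := norm_pos_iff.2 hu0
  have hb : (0:ℝ) < ‖v‖ := norm_pos_iff.2 hv0
  have hmem1 : -(‖u‖⁻¹ • u) ∈ -K₁ :=
    Set.neg_mem_neg.2 (hK₁cone _ (inv_nonneg.2 ha.le) u hu)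
  have hmem2 : ‖v‖⁻¹ • v ∈ K₂ := hK₂cone _ (inv_nonneg.2 hb.le) v hv
  have hn1 : ‖-(‖u‖⁻¹ • u)‖ = 1 := by
    rw [norm_neg, norm_smul, Real.norm_eq_abs, abs_of_pos (inv_pos.2 ha), inv_mul_cancel₀ ha.ne']
  have hn2 : ‖‖v‖⁻¹ • v‖ = 1 := by
    rw [norm_smul, Real.norm_eq_abs, abs_of_pos (inv_pos.2 hb), inv_mul_cancel₀ hb.ne']
  have h := hangle _ _ hmem1 hmem2 hn1 hn2
  rw [inner_neg_left, real_inner_smul_left, real_inner_smul_right] at h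
  have h2 := mul_le_mul_of_nonneg_left h (mul_pos ha hb).le
  have h3 : ‖u‖ * ‖v‖ * -(‖u‖⁻¹ * (‖v‖⁻¹ * ⟪u, v⟫)) = -⟪u, v⟫ := by
    field_simp
  rw [h3] at h2
  nlinarith

lemma key_norm_bound {K₁ K₂ : Set (EuclideanSpace ℝ (Fin n))}
    (hK₁cone : ∀ c : ℝ, 0 ≤ c → ∀ x ∈ K₁, c • x ∈ K₁)
    (hK₂cone : ∀ c : ℝ, 0 ≤ c → ∀ x ∈ K₂, c • x ∈ K₂)
    {β : ℝ} (hβ : β ∈ Set.Ioc (0 : ℝ) 1)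
    (hangle : ∀ u v, u ∈ -K₁ → v ∈ K₂ → ‖u‖ = 1 → ‖v‖ = 1 → ⟪u, v⟫ ≤ 1 - β)
    {u v : EuclideanSpace ℝ (Fin n)} (hu : u ∈ K₁) (hv : v ∈ K₂) :
    β * ‖u‖ ^ 2 ≤ ‖u + v‖ ^ 2 := by
  have hin := inner_lower_bound hK₁cone hK₂cone hangle hu hv
  have hexp : ‖u + v‖ ^ 2 = ‖u‖ ^ 2 + 2 * ⟪u, v⟫ + ‖v‖ ^ 2 := norm_add_sq_real u v
  nlinarith [sq_nonneg (‖u‖ - ‖v‖), mul_nonneg (sub_nonneg.2 hβ.2) (sq_nonneg (‖u‖ - ‖v‖)),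
    mul_nonneg hβ.1.le (sq_nonneg ‖v‖)]

lemma sfun_add_le {K₁ K₂ : Set (EuclideanSpace ℝ (Fin n))}
    (hK₁cone : ∀ c : ℝ, 0 ≤ c → ∀ x ∈ K₁, c • x ∈ K₁)
    (hK₂cone : ∀ c : ℝ, 0 ≤ c → ∀ x ∈ K₂, c • x ∈ K₂)
    (h01 : (0 : EuclideanSpace ℝ (Fin n)) ∈ K₁) (h02 : (0 : EuclideanSpace ℝ (Fin n)) ∈ K₂)
    {β : ℝ} (hβ : β ∈ Set.Ioc (0 : ℝ) 1)
    (hangle : ∀ u v, u ∈ -K₁ → v ∈ K₂ → ‖u‖ = 1 → ‖v‖ = 1 → ⟪u, v⟫ ≤ 1 - β)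
    (g : EuclideanSpace ℝ (Fin n)) :
    sfun (K₁ + K₂) g ≤ (sfun K₁ g + sfun K₂ g) / Real.sqrt β := by
  have hb : (0:ℝ) < Real.sqrt β := Real.sqrt_pos.2 hβ.1
  apply Real.sSup_le
  · rintro r ⟨y, hy, hny, rfl⟩
    rw [Set.mem_add] at hy
    obtain ⟨u, hu, v, hv, rfl⟩ := hy
    have hgen : ∀ (L₁ L₂ : Set (EuclideanSpace ℝ (Fin n))),
        (∀ c : ℝ, 0 ≤ c → ∀ x ∈ L₁, c • x ∈ L₁) →
        (∀ w z, w ∈ L₁ → z ∈ L₂ → β * ‖w‖ ^ 2 ≤ ‖w + z‖ ^ 2) →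
        ∀ w z, w ∈ L₁ → z ∈ L₂ → ‖w + z‖ ≤ 1 → ⟪g, w⟫ ≤ sfun L₁ g / Real.sqrt β := by
      intro L₁ L₂ hcone hkey w z hw hz hwz
      have hmem : Real.sqrt β • w ∈ L₁ := hcone _ hb.le w hw
      have hn : ‖Real.sqrt β • w‖ ≤ 1 := by
        rw [norm_smul, Real.norm_eq_abs, abs_of_pos hb]
        nlinarith [hkey w z hw hz, norm_nonneg w, norm_nonneg (w + z), Real.sq_sqrt hβ.1.le,
          Real.sqrt_nonneg β]
      have hle : ⟪g, Real.sqrt β • w⟫ ≤ sfun L₁ g :=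
        le_csSup (sfun_bdd L₁ g) ⟨_, hmem, hn, rfl⟩
      rw [real_inner_smul_right] at hle
      rw [le_div_iff₀ hb]
      linarith
    have h1 : ⟪g, u⟫ ≤ sfun K₁ g / Real.sqrt β :=
      hgen K₁ K₂ hK₁cone (fun w z hw hz => key_norm_bound hK₁cone hK₂cone hβ hangle hw hz)
        u v hu hv hny
    have h2 : ⟪g, v⟫ ≤ sfun K₂ g / Real.sqrt β := by
      have hangle' : ∀ a b', a ∈ -K₂ → b' ∈ K₁ → ‖a‖ = 1 → ‖b'‖ = 1 → ⟪a, b'⟫ ≤ 1 - β := by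
        intro a b' ha hbk hna hnb
        rw [Set.mem_neg] at ha
        have := hangle (-b') (-a) (Set.neg_mem_neg.2 hbk) ha (by rwa [norm_neg])
          (by rwa [norm_neg])
        rw [inner_neg_neg, real_inner_comm] at this
        exact this
      exact hgen K₂ K₁ hK₂cone
        (fun w z hw hz => key_norm_bound hK₂cone hK₁cone hβ hangle' hw hz)
        v u hv hu (by rwa [add_comm])
    rw [inner_add_right]
    calc ⟪g, u⟫ + ⟪g, v⟫ ≤ sfun K₁ g / Real.sqrt β + sfun K₂ g / Real.sqrt β := add_le_add h1 h2
      _ = (sfun K₁ g + sfun K₂ g) / Real.sqrt β := (add_div _ _ _).symm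
  · have := sfun_nonneg h01 g
    have := sfun_nonneg h02 g
    positivity

end sfun

/-- If `cos∠(−K₁, K₂) ≤ 1 − β`, then
`√δ(K₁+K₂) ≤ (√δ(K₁) + √δ(K₂))/√β`. -/
theorem statDim_sum_bound {n : ℕ} (K₁ K₂ : Set (EuclideanSpace ℝ (Fin n)))
    (hK₁c : IsClosed K₁) (hK₂c : IsClosed K₂)
    (hK₁conv : Convex ℝ K₁) (hK₂conv : Convex ℝ K₂)
    (hK₁cone : ∀ c : ℝ, 0 ≤ c → ∀ x ∈ K₁, c • x ∈ K₁)
    (hK₂cone : ∀ c : ℝ, 0 ≤ c → ∀ x ∈ K₂, c • x ∈ K₂)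
    (β : ℝ) (hβ : β ∈ Set.Ioc (0 : ℝ) 1)
    (hangle : ∀ u v, u ∈ -K₁ → v ∈ K₂ → ‖u‖ = 1 → ‖v‖ = 1 → ⟪u, v⟫ ≤ 1 - β) :
    Real.sqrt (statDim (K₁ + K₂)) ≤
      (Real.sqrt (statDim K₁) + Real.sqrt (statDim K₂)) / Real.sqrt β := by
  have hRHSnn : 0 ≤ (Real.sqrt (statDim K₁) + Real.sqrt (statDim K₂)) / Real.sqrt β := by
    positivity
  rcases K₁.eq_empty_or_nonempty with h₁ | h₁
  · have hsum : K₁ + K₂ = ∅ := by simp [h₁]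
    have h0 : statDim (K₁ + K₂) = 0 := by
      simp [statDim, hsum, Real.sSup_empty]
    rw [h0, Real.sqrt_zero]
    exact hRHSnn
  rcases K₂.eq_empty_or_nonempty with h₂ | h₂
  · have hsum : K₁ + K₂ = ∅ := by simp [h₂]
    have h0 : statDim (K₁ + K₂) = 0 := by
      simp [statDim, hsum, Real.sSup_empty]
    rw [h0, Real.sqrt_zero]
    exact hRHSnn
  have h01 : (0 : EuclideanSpace ℝ (Fin n)) ∈ K₁ := by
    obtain ⟨x, hx⟩ := h₁
    simpa using hK₁cone 0 le_rfl x hx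
  have h02 : (0 : EuclideanSpace ℝ (Fin n)) ∈ K₂ := by
    obtain ⟨x, hx⟩ := h₂
    simpa using hK₂cone 0 le_rfl x hx
  have h0sum : (0 : EuclideanSpace ℝ (Fin n)) ∈ K₁ + K₂ := by
    simpa using Set.add_mem_add h01 h02
  -- Membership in L², integrability facts
  have hnormsq := integrable_norm_sq n
  have memL2 : ∀ K : Set (EuclideanSpace ℝ (Fin n)), (0 : EuclideanSpace ℝ (Fin n)) ∈ K →
      MemLp (sfun K) 2 (stdGaussian n) := by
    intro K h0
    have hmeas := (sfun_lipschitz h0).continuous.aestronglyMeasurable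
      (μ := stdGaussian n)
    refine (memLp_two_iff_integrable_sq hmeas).2 ?_
    refine hnormsq.mono (((sfun_lipschitz h0).continuous.pow 2).aestronglyMeasurable) ?_
    refine ae_of_all _ fun g => ?_
    have hle1 := sfun_nonneg h0 g
    have hle2 := sfun_le_norm K g
    rw [Real.norm_eq_abs, Real.norm_eq_abs, abs_of_nonneg (by positivity),
      abs_of_nonneg (by positivity)]
    nlinarith
  have hm1 := memL2 K₁ h01
  have hm2 := memL2 K₂ h02
  have hmS := memL2 (K₁ + K₂) h0sum
  have hi1 : Integrable (fun g => sfun K₁ g ^ 2) (stdGaussian n) := hm1.integrable_sq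
  have hi2 : Integrable (fun g => sfun K₂ g ^ 2) (stdGaussian n) := hm2.integrable_sq
  have hiS : Integrable (fun g => sfun (K₁ + K₂) g ^ 2) (stdGaussian n) := hmS.integrable_sq
  have hiSumSq : Integrable (fun g => (sfun K₁ g + sfun K₂ g) ^ 2) (stdGaussian n) := by
    have := (hm1.add hm2).integrable_sq
    simpa using this
  have hprod : Integrable (fun g => sfun K₁ g * sfun K₂ g) (stdGaussian n) := by
    refine ((hi1.add hi2).div_const 2).mono
      (hm1.aestronglyMeasurable.mul hm2.aestronglyMeasurable) ?_
    refine ae_of_all _ fun g => ?_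
    simp only [Pi.add_apply]
    have n1 := sfun_nonneg h01 g
    have n2 := sfun_nonneg h02 g
    rw [Real.norm_eq_abs, Real.norm_eq_abs, abs_of_nonneg (by positivity),
      abs_of_nonneg (by positivity)]
    nlinarith [sq_nonneg (sfun K₁ g - sfun K₂ g)]
  -- pointwise squared bound
  have hpt : ∀ g, sfun (K₁ + K₂) g ^ 2 ≤ (sfun K₁ g + sfun K₂ g) ^ 2 / β := by
    intro g
    have h := sfun_add_le hK₁cone hK₂cone h01 h02 hβ hangle g
    have h0 := sfun_nonneg h0sum g
    have heq : ((sfun K₁ g + sfun K₂ g) / Real.sqrt β) ^ 2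
        = (sfun K₁ g + sfun K₂ g) ^ 2 / β := by
      rw [div_pow, Real.sq_sqrt hβ.1.le]
    rw [← heq]
    exact pow_le_pow_left₀ h0 h 2
  have hSdef : statDim (K₁ + K₂) = ∫ g, sfun (K₁ + K₂) g ^ 2 ∂(stdGaussian n) := rfl
  have h1def : statDim K₁ = ∫ g, sfun K₁ g ^ 2 ∂(stdGaussian n) := rfl
  have h2def : statDim K₂ = ∫ g, sfun K₂ g ^ 2 ∂(stdGaussian n) := rfl
  have hI1nn : 0 ≤ statDim K₁ := by
    rw [h1def]; exact integral_nonneg fun g => sq_nonneg _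
  have hI2nn : 0 ≤ statDim K₂ := by
    rw [h2def]; exact integral_nonneg fun g => sq_nonneg _
  have hIle : statDim (K₁ + K₂)
      ≤ (∫ g, (sfun K₁ g + sfun K₂ g) ^ 2 ∂(stdGaussian n)) / β := by
    rw [hSdef, ← integral_div]
    exact integral_mono hiS (hiSumSq.div_const β) hpt
  -- Cauchy–Schwarz
  have hcs : ∫ g, sfun K₁ g * sfun K₂ g ∂(stdGaussian n)
      ≤ Real.sqrt (statDim K₁) * Real.sqrt (statDim K₂) := by
    have hpq : Real.HolderConjugate 2 2 := Real.HolderConjugate.two_two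
    have hofReal : ENNReal.ofReal (2:ℝ) = 2 := by norm_num
    have h := integral_mul_le_Lp_mul_Lq_of_nonneg hpq
      (ae_of_all _ (sfun_nonneg h01)) (ae_of_all _ (sfun_nonneg h02))
      (by rwa [hofReal]) (by rwa [hofReal])
    have hrpow : ∀ f : EuclideanSpace ℝ (Fin n) → ℝ,
        (∫ g, f g ^ (2:ℝ) ∂(stdGaussian n)) = ∫ g, f g ^ 2 ∂(stdGaussian n) := by
      intro f
      congr 1
      ext g
      rw [show (2:ℝ) = ((2:ℕ):ℝ) by norm_num, Real.rpow_natCast]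
    rw [hrpow, hrpow] at h
    rw [h1def, h2def, Real.sqrt_eq_rpow, Real.sqrt_eq_rpow]
    exact h
  have hexp : ∫ g, (sfun K₁ g + sfun K₂ g) ^ 2 ∂(stdGaussian n)
      = statDim K₁ + 2 * (∫ g, sfun K₁ g * sfun K₂ g ∂(stdGaussian n)) + statDim K₂ := by
    rw [h1def, h2def]
    have heq : (fun g => (sfun K₁ g + sfun K₂ g) ^ 2)
        = fun g => sfun K₁ g ^ 2 + (2 * (sfun K₁ g * sfun K₂ g) + sfun K₂ g ^ 2) := by
      ext g; ring
    have hadd : Integrable (fun g => 2 * (sfun K₁ g * sfun K₂ g) + sfun K₂ g ^ 2)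
        (stdGaussian n) := by
      exact (hprod.const_mul 2).add hi2
    rw [heq, integral_add hi1 hadd, integral_add (hprod.const_mul 2) hi2, integral_const_mul]
    ring
  have hfinal : statDim (K₁ + K₂)
      ≤ (Real.sqrt (statDim K₁) + Real.sqrt (statDim K₂)) ^ 2 / β := by
    have hnum : ∫ g, (sfun K₁ g + sfun K₂ g) ^ 2 ∂(stdGaussian n)
        ≤ (Real.sqrt (statDim K₁) + Real.sqrt (statDim K₂)) ^ 2 := by
      rw [hexp]
      have e1 : Real.sqrt (statDim K₁) ^ 2 = statDim K₁ := Real.sq_sqrt hI1nn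
      have e2 : Real.sqrt (statDim K₂) ^ 2 = statDim K₂ := Real.sq_sqrt hI2nn
      nlinarith
    calc statDim (K₁ + K₂)
        ≤ (∫ g, (sfun K₁ g + sfun K₂ g) ^ 2 ∂(stdGaussian n)) / β := hIle
      _ ≤ (Real.sqrt (statDim K₁) + Real.sqrt (statDim K₂)) ^ 2 / β := by
          gcongr
          exact hβ.1.le
  have hfin2 := Real.sqrt_le_sqrt hfinal
  rwa [Real.sqrt_div (sq_nonneg _) β, Real.sqrt_sq (by positivity)] at hfin2
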